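/- arXiv:0707.1809 — 4 statements merged into one kernel-verified Lean document; each statement's English description precedes it below -/
import Mathlib

section
/- Let I be a set and for each i ∈ I let D_i be a nonempty directed preordered set and M_i : D_i → Ab a directed system of abelian groups. Let D := ∏_{i∈I} D_i, ordered pointwise (so D is a nonempty directed set), and consider the directed system over D whose value at d ∈ D is the abelian group ∏_{i∈I} M_i(d(i)), with transition maps the products of the transition maps of the M_i. Then the canonical homomorphism colim_{d∈D} ( ∏_{i∈I} M_i(d(i)) ) → ∏_{i∈I} ( colim_{D_i} M_i ) is an isomorphism of abelian groups. -/
/-!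
STATEMENT 2: For directed systems of abelian groups `M_i : D_i ⥤ Ab` (each `D_i` a
nonempty directed preordered set), the canonical homomorphism
`colim_{d ∈ ∏ D_i} (∏_i M_i(d i)) → ∏_i (colim_{D_i} M_i)` is an isomorphism,
where `∏ D_i` carries the pointwise (pre)order.
-/

open CategoryTheory Limits

universe u

noncomputable section

namespace Statement2

variable {ι : Type u} (D : ι → Type u) [∀ i, Preorder (D i)]

/-- The product `∏_i D_i` with the pointwise preorder (as a type synonym, so that its
category structure is the one coming from the pointwise preorder). -/
def PiD : Type u := ∀ i, D i

instance : Preorder (PiD D) := inferInstanceAs (Preorder (∀ i, D i))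

instance [∀ i, Nonempty (D i)] : Nonempty (PiD D) :=
  inferInstanceAs (Nonempty (∀ i, D i))

instance [∀ i, IsDirected (D i) (· ≤ ·)] : IsDirected (PiD D) (· ≤ ·) where
  directed d d' := by
    choose e he he' using fun i => directed_of (· ≤ ·) (d i) (d' i)
    exact ⟨e, fun i => he i, fun i => he' i⟩

variable (M : ∀ i, D i ⥤ AddCommGrpCat.{u})

/-- The transition maps of the product system: the products of the transition maps. -/
def prodMap {d d' : PiD D} (h : d ⟶ d') :
    AddCommGrpCat.of (∀ i, (M i).obj (d i)) ⟶ AddCommGrpCat.of (∀ i, (M i).obj (d' i)) :=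
  AddCommGrpCat.ofHom
    (AddMonoidHom.mk' (fun x i => (M i).map (homOfLE (leOfHom h i)) (x i))
      (by intro x y; funext i; exact map_add _ _ _))

/-- The directed system `d ↦ ∏_i M_i (d i)` over the pointwise ordered product
`D = ∏_i D_i`, with transition maps the products of those of the `M_i`. -/
def prodSystem : PiD D ⥤ AddCommGrpCat.{u} where
  obj d := AddCommGrpCat.of (∀ i, (M i).obj (d i))
  map h := prodMap D M h
  map_id d := by
    ext x i
    show (M i).map (homOfLE (leOfHom (𝟙 d) i)) (x i) = x i
    rw [show homOfLE (leOfHom (𝟙 d) i) = 𝟙 (d i) from Subsingleton.elim _ _,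
      CategoryTheory.Functor.map_id]
    rfl
  map_comp {d d' d''} h h' := by
    ext x i
    show (M i).map (homOfLE (leOfHom (h ≫ h') i)) (x i) =
      (M i).map (homOfLE (leOfHom h' i)) ((M i).map (homOfLE (leOfHom h i)) (x i))
    rw [show homOfLE (leOfHom (h ≫ h') i) =
        homOfLE (leOfHom h i) ≫ homOfLE (leOfHom h' i) from Subsingleton.elim _ _,
      CategoryTheory.Functor.map_comp]
    rfl

/-- The cocone on the product system whose point is the product of the colimits,
with structural maps the products of the colimit structural maps. -/
def prodCocone : Cocone (prodSystem D M) where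
  pt := AddCommGrpCat.of (∀ i, ↥(colimit (M i)))
  ι :=
    { app := fun d => AddCommGrpCat.ofHom
        (AddMonoidHom.mk' (fun (x : ∀ i, (M i).obj (d i)) i => colimit.ι (M i) (d i) (x i))
          (by
            intro x y; funext i
            exact map_add (colimit.ι (M i) (d i)).hom (x i) (y i)))
      naturality := by
        intro d d' h
        ext x
        funext i
        exact congrArg (fun (f : (M i).obj (d i) ⟶ colimit (M i)) => f.hom (x i))
          (colimit.w (M i) (homOfLE (leOfHom h i))) }

/-- The canonical homomorphism
`colim_{d ∈ ∏ D_i} (∏_i M_i (d i)) ⟶ ∏_i colim_{D_i} M_i`. -/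
def canonicalMap : colimit (prodSystem D M) ⟶ AddCommGrpCat.of (∀ i, ↥(colimit (M i))) :=
  colimit.desc (prodSystem D M) (prodCocone D M)

end Statement2

open Statement2

/-- Let `I` be a set, and for each `i ∈ I` let `D_i` be a nonempty
directed preordered set and `M_i : D_i ⥤ Ab` a directed system of abelian groups.
Let `D = ∏_i D_i` with the pointwise order. Then the canonical homomorphism
`colim_{d ∈ D} (∏_i M_i(d i)) → ∏_i (colim_{D_i} M_i)` is an isomorphism of abelian
groups. -/
theorem statement2 {ι : Type u} (D : ι → Type u) [∀ i, Preorder (D i)]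
    [∀ i, Nonempty (D i)] [∀ i, IsDirected (D i) (· ≤ ·)]
    (M : ∀ i, D i ⥤ AddCommGrpCat.{u}) :
    IsIso (canonicalMap D M) := by
  rw [ConcreteCategory.isIso_iff_bijective]
  constructor
  · -- injectivity
    show Function.Injective (canonicalMap D M)
    rw [injective_iff_map_eq_zero ((canonicalMap D M).hom)]
    intro a ha
    obtain ⟨d, x, rfl⟩ := Limits.Concrete.colimit_exists_rep (prodSystem D M) a
    have h2 : canonicalMap D M (colimit.ι (prodSystem D M) d x) =
        (prodCocone D M).ι.app d x :=
      congrArg (fun (f : (prodSystem D M).obj d ⟶ _) => f x)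
        (colimit.ι_desc (prodCocone D M) d)
    rw [h2] at ha
    have hx : ∀ i, colimit.ι (M i) (d i) (x i) = 0 := fun i =>
      congrFun (show ((prodCocone D M).ι.app d x : ∀ i, ↥(colimit (M i))) = 0 from ha) i
    have hx' : ∀ i, ∃ (k : D i) (f : d i ⟶ k) (g : d i ⟶ k),
        (M i).map f (x i) = (M i).map g 0 := fun i =>
      Limits.Concrete.colimit_exists_of_rep_eq (M i) (x i) 0
        (by rw [hx i, map_zero (colimit.ι (M i) (d i)).hom])
    choose d' f g hf using hx'
    have hle : d ≤ d' := fun i => leOfHom (f i)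
    have key : (prodSystem D M).map (homOfLE hle) x = 0 := by
      funext i
      show (M i).map (homOfLE (leOfHom (homOfLE hle) i)) (x i) = 0
      rw [show homOfLE (leOfHom (homOfLE hle) i) = f i from Subsingleton.elim _ _, hf i]
      exact map_zero ((M i).map (g i)).hom
    calc colimit.ι (prodSystem D M) d x
        = colimit.ι (prodSystem D M) d' ((prodSystem D M).map (homOfLE hle) x) := by
          exact (congrArg (fun (g : (prodSystem D M).obj d ⟶ _) => g x)
            (colimit.w (prodSystem D M) (homOfLE hle))).symm
      _ = colimit.ι (prodSystem D M) d' 0 := by rw [key]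
      _ = 0 := map_zero (colimit.ι (prodSystem D M) d').hom
  · -- surjectivity
    show Function.Surjective (canonicalMap D M)
    intro y
    choose d x hx using fun i => Limits.Concrete.colimit_exists_rep (M i) (y i)
    refine ⟨colimit.ι (prodSystem D M) d x, ?_⟩
    have h2 : canonicalMap D M (colimit.ι (prodSystem D M) d x) =
        (prodCocone D M).ι.app d x :=
      congrArg (fun (f : (prodSystem D M).obj d ⟶ _) => f x)
        (colimit.ι_desc (prodCocone D M) d)
    show canonicalMap D M (colimit.ι (prodSystem D M) d x) = y
    rw [h2]
    funext i
    exact hx i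

end
end

section
/- Let u : V′ → V be a continuous map of topological spaces which is a closed map, has finite fibers, and is such that any two distinct points lying in a common fiber of u admit disjoint open neighborhoods in V′. Then for every abelian sheaf F on V′ and every point x ∈ V, the canonical map (u_*F)_x → ∏_{y ∈ u^{-1}(x)} F_y, induced by the germ maps, is an isomorphism of abelian groups. -/
/-!
STATEMENT 3: If `u : V' → V` is a closed map with finite fibers whose fiber points can be
separated by disjoint opens, then for every abelian sheaf `F` on `V'` and every `x ∈ V`,
the canonical map `(u_*F)_x → ∏_{y ∈ u⁻¹(x)} F_y` is an isomorphism of abelian groups.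
-/

open CategoryTheory Limits TopologicalSpace Opposite TopCat
open scoped AlgebraicGeometry

universe u

noncomputable section

namespace Statement3

variable {V' V : TopCat.{u}} (u : V' ⟶ V) (F : TopCat.Sheaf AddCommGrpCat.{u} V') (x : V)

/-- The canonical map `(u_*F)_x ⟶ ∏_{y ∈ u⁻¹(x)} F_y` induced by the germ maps
(each component is the induced map on stalks of the pushforward). -/
def canonicalStalkMap :
    TopCat.Presheaf.stalk (u _* F.val) x ⟶
      AddCommGrpCat.of (∀ y : (u ⁻¹' {x} : Set V'), ↥(TopCat.Presheaf.stalk F.val (y : V'))) :=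
  AddCommGrpCat.ofHom
    (AddMonoidHom.mk'
      (fun s y =>
        (TopCat.Presheaf.stalkPushforward AddCommGrpCat.{u} u F.val (y : V'))
          ((eqToHom (by rw [show u (y : V') = x from y.2]) :
              (u _* F.val).stalk x ⟶ (u _* F.val).stalk (u (y : V'))) s))
      (by intro s t; funext y; simp only [Pi.add_apply]; erw [map_add, map_add]))

lemma sub_bot {X : TopCat.{u}} (F : TopCat.Sheaf AddCommGrpCat.{u} X) {U : Opens X} (h : U = ⊥) :
    Subsingleton (F.val.obj (op U)) := by
  have t := F.isTerminalOfEqEmpty h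
  constructor
  intro a b
  let fa : AddCommGrpCat.of (ULift.{u} ℤ) ⟶ F.val.obj (op U) :=
    AddCommGrpCat.ofHom ((zmultiplesHom _ a).comp AddEquiv.ulift.toAddMonoidHom)
  let fb : AddCommGrpCat.of (ULift.{u} ℤ) ⟶ F.val.obj (op U) :=
    AddCommGrpCat.ofHom ((zmultiplesHom _ b).comp AddEquiv.ulift.toAddMonoidHom)
  have heq : fa = fb := t.hom_ext fa fb
  have h1 : fa (ULift.up (1 : ℤ)) = a := one_zsmul a
  have h2 : fb (ULift.up (1 : ℤ)) = b := one_zsmul b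
  rw [← h1, ← h2, heq]

lemma closed_nbhd {X Y : Type u} [TopologicalSpace X] [TopologicalSpace Y] {u : X → Y}
    (hclosed : IsClosedMap u) {x : Y} {W : Set X} (hW : IsOpen W) (hsub : u ⁻¹' {x} ⊆ W) :
    ∃ U : Set Y, IsOpen U ∧ x ∈ U ∧ u ⁻¹' U ⊆ W := by
  refine ⟨(u '' Wᶜ)ᶜ, (hclosed _ hW.isClosed_compl).isOpen_compl, ?_, ?_⟩
  · rintro ⟨y, hy, rfl⟩
    exact hy (hsub rfl)
  · intro y hy
    by_contra h
    exact hy ⟨y, h, rfl⟩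

lemma res_res {X : TopCat.{u}} (F : TopCat.Presheaf AddCommGrpCat.{u} X) {A B C : Opens X}
    (f : A ⟶ B) (g : B ⟶ C) (s : F.obj (op C)) :
    F.map f.op (F.map g.op s) = F.map (f ≫ g).op s := by
  rw [op_comp, F.map_comp, comp_apply]

lemma hom_map_zero {A B : AddCommGrpCat.{u}} (f : A ⟶ B) : f (0 : A) = (0 : B) :=
  f.hom.map_zero

lemma map_eq_map {X : TopCat.{u}} (F : TopCat.Presheaf AddCommGrpCat.{u} X) {A B : Opens X}
    (f g : A ⟶ B) (s : F.obj (op B)) : F.map f.op s = F.map g.op s := by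
  rw [Subsingleton.elim f g]

lemma canonicalStalkMap_germ (U : Opens V) (hx : x ∈ U)
    (s : F.val.obj (op ((Opens.map u).obj U))) (y : V') (hy : u y = x)
    (hyU : y ∈ (Opens.map u).obj U) :
    canonicalStalkMap u F x ((u _* F.val).germ U x hx s) ⟨y, hy⟩ =
      TopCat.Presheaf.germ F.val ((Opens.map u).obj U) y hyU s := by
  subst hy
  simp only [canonicalStalkMap, AddCommGrpCat.ofHom, AddMonoidHom.mk'_apply, eqToHom_refl]
  exact TopCat.Presheaf.stalkPushforward_germ_apply AddCommGrpCat.{u} u F.val U y hx s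

end Statement3

open Statement3

/-- Let `u : V′ → V` be a continuous map of topological spaces which is
closed, has finite fibers, and such that any two distinct points in a common fiber admit
disjoint open neighborhoods. Then for every abelian sheaf `F` on `V′` and every `x ∈ V`,
the canonical map `(u_*F)_x → ∏_{y ∈ u⁻¹(x)} F_y` induced by the germ maps is an
isomorphism of abelian groups. -/
theorem statement3 {V' V : TopCat.{u}} (u : V' ⟶ V)
    (hclosed : IsClosedMap u)
    (hfin : ∀ x : V, (u ⁻¹' {x} : Set V').Finite)
    (hsep : ∀ y₁ y₂ : V', y₁ ≠ y₂ → u y₁ = u y₂ →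
      ∃ U₁ U₂ : Set V', IsOpen U₁ ∧ IsOpen U₂ ∧ y₁ ∈ U₁ ∧ y₂ ∈ U₂ ∧ Disjoint U₁ U₂)
    (F : TopCat.Sheaf AddCommGrpCat.{u} V') (x : V) :
    IsIso (canonicalStalkMap u F x) := by
  classical
  haveI : Fintype (u ⁻¹' {x} : Set V') := (hfin x).fintype
  rw [ConcreteCategory.isIso_iff_bijective]
  constructor
  · -- injectivity
    suffices hker : ∀ a : ↥(TopCat.Presheaf.stalk
        ((TopCat.Presheaf.pushforward AddCommGrpCat.{u} u).obj F.val) x),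
        canonicalStalkMap u F x a = 0 → a = 0 by
      intro a b hab
      have h1 : canonicalStalkMap u F x (a - b) = 0 := by
        rw [map_sub, sub_eq_zero]
        exact hab
      have := hker _ h1
      rwa [sub_eq_zero] at this
    intro a ha
    obtain ⟨U, hxU, s, rfl⟩ := TopCat.Presheaf.germ_exist (u _* F.val) (x := x) a
    have key : ∀ y : (u ⁻¹' {x} : Set V'), ∃ (W : Opens V') (_ : (y : V') ∈ W)
        (iU : W ⟶ (Opens.map u).obj U), F.val.map iU.op s = 0 := by
      intro y
      have hyx : u (y : V') = x := y.2
      have hyU : (y : V') ∈ (Opens.map u).obj U := by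
        show u (y : V') ∈ U
        rw [hyx]; exact hxU
      have hgy : TopCat.Presheaf.germ F.val ((Opens.map u).obj U) (y : V') hyU s = 0 := by
        rw [← canonicalStalkMap_germ u F x U hxU s (y : V') hyx hyU]
        exact congrFun ha y
      have hzero : TopCat.Presheaf.germ F.val ((Opens.map u).obj U) (y : V') hyU s =
          TopCat.Presheaf.germ F.val ((Opens.map u).obj U) (y : V') hyU 0 := by
        rw [hgy, hom_map_zero]
      obtain ⟨W, hW, iU, iV, h⟩ :=
        TopCat.Presheaf.germ_eq F.val (y : V') hyU hyU s 0 hzero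
      refine ⟨W, hW, iU, ?_⟩
      rw [h, hom_map_zero]
    choose W hmemW iW hzeroW using key
    obtain ⟨U0, hU0, hxU0, hU0sub⟩ := closed_nbhd hclosed (⨆ y, W y : Opens V').isOpen
      (fun z hz => Opens.mem_iSup.mpr ⟨⟨z, hz⟩, hmemW _⟩)
    set U' : Opens V := ⟨U0 ∩ U, hU0.inter U.isOpen⟩ with hU'def
    have hxU' : x ∈ U' := ⟨hxU0, hxU⟩
    have hle : U' ≤ U := fun z hz => hz.2
    set s' : F.val.obj (op ((Opens.map u).obj U')) :=
      F.val.map (homOfLE (show (Opens.map u).obj U' ≤ (Opens.map u).obj U from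
        fun z hz => hz.2)).op s with hs'def
    have hs'0 : s' = 0 := by
      apply F.eq_of_locally_eq'
        (fun y : (u ⁻¹' {x} : Set V') => W y ⊓ (Opens.map u).obj U')
        ((Opens.map u).obj U') (fun y => homOfLE inf_le_right)
      · intro z hz
        have hz0 : z ∈ (⨆ y, W y : Opens V') := hU0sub hz.1
        obtain ⟨y, hy⟩ := Opens.mem_iSup.mp hz0
        exact Opens.mem_iSup.mpr ⟨y, hy, hz⟩
      · intro y
        rw [hom_map_zero, hs'def, res_res,
          map_eq_map F.val _ ((homOfLE inf_le_left : W y ⊓ (Opens.map u).obj U' ⟶ W y) ≫ iW y),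
          ← res_res, hzeroW, hom_map_zero]
    have ha2 : (u _* F.val).germ U x hxU s = (u _* F.val).germ U' x hxU' s' := by
      apply TopCat.Presheaf.germ_ext (u _* F.val) U' hxU' (homOfLE hle) (𝟙 U')
      rw [op_id, CategoryTheory.Functor.map_id, id_apply]
      exact map_eq_map F.val _ _ s
    rw [ha2, hs'0]
    exact hom_map_zero _
  · -- surjectivity
    intro g
    choose Wg hmemWg sec hsec using fun y : (u ⁻¹' {x} : Set V') =>
      TopCat.Presheaf.germ_exist F.val (x := (y : V')) (g y)
    have sep : ∀ y z : (u ⁻¹' {x} : Set V'), ∃ P Q : Set V',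
        IsOpen P ∧ IsOpen Q ∧ (y : V') ∈ P ∧ (z : V') ∈ Q ∧ (y ≠ z → Disjoint P Q) := by
      intro y z
      by_cases h : y = z
      · exact ⟨Set.univ, Set.univ, isOpen_univ, isOpen_univ, trivial, trivial,
          fun hne => absurd h hne⟩
      · obtain ⟨P, Q, hP, hQ, h1, h2, h3⟩ := hsep (y : V') (z : V')
          (fun e => h (Subtype.ext e))
          (by rw [show u (y : V') = x from y.2, show u (z : V') = x from z.2])
        exact ⟨P, Q, hP, hQ, h1, h2, fun _ => h3⟩
    choose P Q hPopen hQopen hmemP hmemQ hdisjPQ using sep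
    set W' : (u ⁻¹' {x} : Set V') → Opens V' := fun y =>
      ⟨↑(Wg y) ∩ ⋂ z : (u ⁻¹' {x} : Set V'), (P y z ∩ Q z y),
        (Wg y).isOpen.inter (isOpen_iInter_of_finite fun z =>
          (hPopen y z).inter (hQopen z y))⟩ with hW'def
    have hmemW' : ∀ y : (u ⁻¹' {x} : Set V'), (y : V') ∈ W' y := fun y =>
      ⟨hmemWg y, Set.mem_iInter.mpr fun z => ⟨hmemP y z, hmemQ z y⟩⟩
    have hdisj : ∀ y z : (u ⁻¹' {x} : Set V'), y ≠ z → W' y ⊓ W' z = ⊥ := by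
      intro y z hne
      refine le_antisymm ?_ bot_le
      intro w hw
      have h1 : w ∈ P y z := (Set.mem_iInter.mp hw.1.2 z).1
      have h2 : w ∈ Q y z := (Set.mem_iInter.mp hw.2.2 y).2
      exact absurd ((hdisjPQ y z hne).le_bot ⟨h1, h2⟩) (Set.notMem_empty w)
    set sf : ∀ y : (u ⁻¹' {x} : Set V'), F.val.obj (op (W' y)) := fun y =>
      F.val.map (homOfLE (show W' y ≤ Wg y from fun w hw => hw.1)).op (sec y) with hsfdef
    have compat : TopCat.Presheaf.IsCompatible F.val W' sf := by
      intro i j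
      by_cases h : i = j
      · subst h
        exact map_eq_map F.val _ _ _
      · haveI := sub_bot F (hdisj i j h)
        exact Subsingleton.elim _ _
    obtain ⟨gl, hgl, -⟩ := F.existsUnique_gluing W' sf compat
    obtain ⟨U0, hU0, hxU0, hU0sub⟩ := closed_nbhd hclosed (⨆ y, W' y : Opens V').isOpen
      (fun z hz => Opens.mem_iSup.mpr ⟨⟨z, hz⟩, hmemW' _⟩)
    set U' : Opens V := ⟨U0, hU0⟩ with hU'def
    have hle : (Opens.map u).obj U' ≤ ⨆ y, W' y := fun z hz => hU0sub hz
    set t : F.val.obj (op ((Opens.map u).obj U')) := F.val.map (homOfLE hle).op gl with htdef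
    refine ⟨(u _* F.val).germ U' x hxU0 t, ?_⟩
    funext y
    show canonicalStalkMap u F x ((u _* F.val).germ U' x hxU0 t) y = g y
    have hyx : u (y : V') = x := y.2
    have hyU' : (y : V') ∈ (Opens.map u).obj U' := by
      show u (y : V') ∈ U0
      rw [hyx]; exact hxU0
    have step1 : canonicalStalkMap u F x ((u _* F.val).germ U' x hxU0 t) y =
        TopCat.Presheaf.germ F.val ((Opens.map u).obj U') (y : V') hyU' t :=
      canonicalStalkMap_germ u F x U' hxU0 t (y : V') hyx hyU'
    rw [step1]
    have step2 : TopCat.Presheaf.germ F.val ((Opens.map u).obj U') (y : V') hyU' t =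
        TopCat.Presheaf.germ F.val (Wg y) (y : V') (hmemWg y) (sec y) := by
      apply TopCat.Presheaf.germ_ext F.val (W' y ⊓ (Opens.map u).obj U')
        ⟨hmemW' y, hyU'⟩ (homOfLE inf_le_right)
        (homOfLE (le_trans inf_le_left (show W' y ≤ Wg y from fun w hw => hw.1)))
      rw [htdef, res_res,
        map_eq_map F.val _
          ((homOfLE inf_le_left : W' y ⊓ (Opens.map u).obj U' ⟶ W' y) ≫ Opens.leSupr W' y),
        ← res_res, hgl y, hsfdef, res_res]
      exact map_eq_map F.val _ _ _
    rw [step2]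
    exact hsec y

end
end

section
/- Let (C, J) be a site such that C has finite products, and let T be an object of C such that for every object X of C the sieve on X generated by the product projection X × T → X is a J-covering sieve. For an abelian sheaf F on (C, J) and r ≥ 0, let C^r_T(F) be the abelian sheaf X ↦ F(X × T^{r+1}) (where T^{r+1} is the (r+1)-fold product of T), with differential d : C^{r-1}_T(F) → C^r_T(F) given by Σ_{j=0}^{r} (−1)^j F(id_X × q_j), where q_j : T^{r+1} → T^r is the product projection deleting the j-th factor, and with augmentation F → C^0_T(F) induced by the projections X × T → X. Then the augmented complex 0 → F → C^0_T(F) → C^1_T(F) → C^2_T(F) → ⋯ is an exact complex in the abelian category of abelian sheaves on (C, J). -/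
/-!
STATEMENT 5: On a site `(C, J)` with finite products, if `T` is an object such that for
every `X` the sieve generated by the projection `X × T → X` is covering, then for every
abelian sheaf `F` the augmented Čech–Alexander complex
`0 → F → (X ↦ F(X × T)) → (X ↦ F(X × T²)) → ⋯` is exact.
-/

open CategoryTheory Limits

universe u

noncomputable section

namespace Statement5

variable {C : Type u} [SmallCategory C] [HasFiniteProducts C]

/-- The `n`-fold product `T^n` (as a `Fin n`-indexed product). -/
def pow (T : C) (n : ℕ) : C := ∏ᶜ fun _ : Fin n => T

/-- The projection `T^{r+2} → T^{r+1}` deleting the `j`-th factor. -/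
def face (T : C) (r : ℕ) (j : Fin (r + 2)) : pow T (r + 2) ⟶ pow T (r + 1) :=
  Pi.lift fun i : Fin (r + 1) => Pi.π (fun _ : Fin (r + 2) => T) (j.succAbove i)

/-- The natural transformation `(X ↦ X × T^{r+2}) ⟶ (X ↦ X × T^{r+1})` induced by the
face map. -/
def faceNat (T : C) (r : ℕ) (j : Fin (r + 2)) :
    prod.functor.flip.obj (pow T (r + 2)) ⟶ prod.functor.flip.obj (pow T (r + 1)) :=
  prod.functor.flip.map (face T r j)

variable (J : GrothendieckTopology C) (T : C)
  [inst : ∀ n : ℕ, (prod.functor.flip.obj (pow T n)).IsContinuous J J]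

/-- The `r`-th term `C^r_T(F) : X ↦ F(X × T^{r+1})` of the Čech–Alexander complex. -/
def CechAl (F : Sheaf J AddCommGrpCat.{u}) (r : ℕ) : Sheaf J AddCommGrpCat.{u} :=
  ((prod.functor.flip.obj (pow T (r + 1))).sheafPushforwardContinuous
    AddCommGrpCat.{u} J J).obj F

/-- The map `C^r_T(F) ⟶ C^{r+1}_T(F)` induced by the `j`-th face map. -/
def CechAlTerm (F : Sheaf J AddCommGrpCat.{u}) (r : ℕ) (j : Fin (r + 2)) :
    CechAl J T F r ⟶ CechAl J T F (r + 1) :=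
  ⟨Functor.whiskerRight (NatTrans.op (faceNat T r j)) F.val⟩

/-- The Čech–Alexander differential, the alternating sum `Σ (-1)^j F(id_X × q_j)`. -/
def CechAlD (F : Sheaf J AddCommGrpCat.{u}) (r : ℕ) : CechAl J T F r ⟶ CechAl J T F (r + 1) :=
  ∑ j : Fin (r + 2), ((-1 : ℤ) ^ (j : ℕ)) • CechAlTerm J T F r j

/-- The natural transformation `(X ↦ X × T) ⟶ 𝟭 C` given by the first projections. -/
def projNat (T : C) : prod.functor.flip.obj (pow T 1) ⟶ 𝟭 C where
  app X := prod.fst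
  naturality X Y f := by exact prod.map_fst _ _

/-- The augmentation `F ⟶ C^0_T(F)` induced by the projections `X × T → X`. -/
def CechAlAug (F : Sheaf J AddCommGrpCat.{u}) : F ⟶ CechAl J T F 0 :=
  ⟨Functor.whiskerRight (NatTrans.op (projNat T)) F.val⟩

end Statement5

open Statement5

section Auxiliary

open Opposite

namespace Statement5Aux

/-! ### `Fin` and product-level identities -/

lemma succAbove_succAbove {n : ℕ} {i j : Fin (n+2)} (H : i ≤ j) (k : Fin (n+1)) :
    j.succ.succAbove (i.succAbove k) = i.castSucc.succAbove (j.succAbove k) := by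
  have := congrArg (fun f => (SimplexCategory.Hom.toOrderHom f) k) (SimplexCategory.δ_comp_δ H)
  simpa [SimplexCategory.δ, SimplexCategory.Hom.comp, SimplexCategory.Hom.toOrderHom_mk]
    using this

variable {C : Type u} [SmallCategory C] [HasFiniteProducts C]

lemma face_face (T : C) {r : ℕ} {j : Fin (r+2)} {k : Fin (r+3)} (H : (k:ℕ) ≤ (j:ℕ)) :
    face T (r+1) k ≫ face T r j =
      face T (r+1) j.succ ≫ face T r (k.castLT (by omega)) := by
  dsimp [face]
  unfold pow
  apply Pi.hom_ext
  intro i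
  simp only [Category.assoc, limit.lift_π, Fan.mk_π_app]
  have : j.succ.succAbove ((k.castLT (by omega : (k:ℕ) < r+2)).succAbove i)
      = (k.castLT (by omega : (k:ℕ) < r+2)).castSucc.succAbove (j.succAbove i) :=
    succAbove_succAbove (by rwa [Fin.le_def]) i
  rw [this, Fin.castSucc_castLT]

@[simp]
lemma lift_π_pow {X : C} (T : C) (n : ℕ) (f : Fin n → (X ⟶ T)) (i : Fin n) :
    (Pi.lift f : X ⟶ pow T n) ≫ (Pi.π (fun _ : Fin n => T) i : pow T n ⟶ T) = f i :=
  Pi.lift_π f i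

variable {Y T : C} (τ : Y ⟶ T)

/-- Inserting `τ` as the `0`-th coordinate. -/
def ins' (n : ℕ) : Y ⨯ (∏ᶜ fun _ : Fin n => T) ⟶ Y ⨯ (∏ᶜ fun _ : Fin (n+1) => T) :=
  prod.lift prod.fst
    (Pi.lift fun i : Fin (n+1) =>
      Fin.cases (prod.fst ≫ τ) (fun i' => prod.snd ≫ Pi.π (fun _ : Fin n => T) i') i)

/-- Inserting `τ` as the `0`-th coordinate. -/
def ins (n : ℕ) : Y ⨯ pow T n ⟶ Y ⨯ pow T (n+1) := ins' τ n

/-- Inserting `τ` as the only coordinate. -/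
def eMap' : Y ⟶ Y ⨯ (∏ᶜ fun _ : Fin 1 => T) :=
  prod.lift (𝟙 Y) (Pi.lift fun _ : Fin 1 => τ)

/-- Inserting `τ` as the only coordinate. -/
def eMap : Y ⟶ Y ⨯ pow T 1 := eMap' τ

lemma ins_face_zero (n : ℕ) :
    ins τ (n+1) ≫ prod.map (𝟙 Y) (face T n 0) = 𝟙 (Y ⨯ pow T (n+1)) := by
  unfold ins face pow
  apply Limits.prod.hom_ext
  · simp [ins']
    rw [prod.lift_fst]
  · apply Pi.hom_ext
    intro i
    simp [ins']
    rw [prod.lift_snd_assoc]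
    simp [Fin.succAbove]

lemma ins_face_succ (n : ℕ) (k : Fin (n+2)) :
    ins τ (n+2) ≫ prod.map (𝟙 Y) (face T (n+1) k.succ) =
      prod.map (𝟙 Y) (face T n k) ≫ ins τ (n+1) := by
  unfold ins face pow
  apply Limits.prod.hom_ext
  · simp [ins']
    rw [prod.lift_fst, prod.lift_fst]
  · apply Pi.hom_ext
    intro i
    simp only [Category.assoc, prod.map_snd, ins', face, limit.lift_π, Fan.mk_π_app,
      prod.lift_snd, prod.lift_snd_assoc]
    induction i using Fin.cases with
    | zero =>
        have h0 : k.succ.succAbove 0 = 0 := by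
          simp [Fin.succAbove_of_castSucc_lt, Fin.castSucc_lt_succ_iff]
        rw [h0]
        simp [prod.map_fst_assoc]
    | succ i' =>
        rw [Fin.succ_succAbove_succ]
        simp

lemma ins_face_one :
    ins τ 1 ≫ prod.map (𝟙 Y) (face T 0 ((0 : Fin 1).succ)) = prod.fst ≫ eMap τ := by
  unfold ins face eMap pow
  apply Limits.prod.hom_ext
  · simp [ins', eMap']
    rw [prod.lift_fst, prod.lift_fst]
  · apply Pi.hom_ext
    intro i
    have hi : i = (0 : Fin 1) := by omega
    subst hi
    have h0 : ((0 : Fin 1).succ).succAbove (0 : Fin 1) = 0 := rfl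
    simp only [Category.assoc, prod.map_snd, ins', face, eMap', limit.lift_π, Fan.mk_π_app,
      prod.lift_snd, prod.lift_snd_assoc, h0]
    simp [prod.map_fst_assoc]

/-! ### Sheaf-theoretic preliminaries -/

variable {J : GrothendieckTopology C}

lemma restrict_restrict (P : Cᵒᵖ ⥤ AddCommGrpCat.{u}) {X Y Z : C} (a : Z ⟶ Y) (b : Y ⟶ X)
    (x : P.obj (op X)) : P.map a.op (P.map b.op x) = P.map (a ≫ b).op x := by
  rw [op_comp, P.map_comp]
  rfl

lemma sections_eq_of_locally_eq (A : Sheaf J AddCommGrpCat.{u}) {X : C} (W : Sieve X)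
    (hW : W ∈ J X) {t₁ t₂ : A.val.obj (op X)}
    (h : ∀ ⦃Z : C⦄ (f : Z ⟶ X), W f → A.val.map f.op t₁ = A.val.map f.op t₂) : t₁ = t₂ := by
  have hs : Presieve.IsSheaf J (A.val ⋙ forget AddCommGrpCat.{u}) := by
    rw [← isSheaf_iff_isSheaf_of_type]
    exact ((sheafCompose J (forget AddCommGrpCat.{u})).obj A).2
  exact ((hs.isSeparated) W hW).ext fun Z f hf => h f hf

lemma sheafHom_eq_zero_of_locally {A B : Sheaf J AddCommGrpCat.{u}} (φ : A ⟶ B)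
    (h : ∀ (X : C) (x : A.val.obj (op X)), ∃ W : Sieve X, W ∈ J X ∧
       ∀ ⦃Z : C⦄ (f : Z ⟶ X), W f → B.val.map f.op (φ.hom.app (op X) x) = 0) : φ = 0 := by
  refine Sheaf.hom_ext ?_
  apply NatTrans.ext
  funext U
  refine AddCommGrpCat.ext fun x => ?_
  obtain ⟨X⟩ := U
  obtain ⟨W, hW, h0⟩ := h X x
  refine sections_eq_of_locally_eq B W hW fun Z f hf => ?_
  rw [h0 f hf]; exact (map_zero _).symm

lemma elem_naturality {A B : Sheaf J AddCommGrpCat.{u}} (φ : A ⟶ B) {X Z : C} (f : Z ⟶ X)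
    (x : A.val.obj (op X)) :
    B.val.map f.op (φ.hom.app (op X) x) = φ.hom.app (op Z) (A.val.map f.op x) := by
  have h := φ.hom.naturality f.op
  calc B.val.map f.op (φ.hom.app (op X) x) = (φ.hom.app (op X) ≫ B.val.map f.op) x := rfl
  _ = (A.val.map f.op ≫ φ.hom.app (op Z)) x := by rw [h]
  _ = φ.hom.app (op Z) (A.val.map f.op x) := rfl

lemma exact_of_locally_exact (S : ShortComplex (Sheaf J AddCommGrpCat.{u}))
    (hloc : ∀ (X : C) (x : S.X₂.val.obj (op X)), S.g.hom.app (op X) x = 0 →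
      ∃ W : Sieve X, W ∈ J X ∧ ∀ ⦃Z : C⦄ (f : Z ⟶ X), W f →
        ∃ y : S.X₁.val.obj (op Z), S.f.hom.app (op Z) y = S.X₂.val.map f.op x) :
    S.Exact := by
  rw [S.exact_iff_kernel_ι_comp_cokernel_π_zero]
  apply sheafHom_eq_zero_of_locally
  intro X k
  set x : S.X₂.val.obj (op X) := (kernel.ι S.g).hom.app (op X) k with hxdef
  have hx : S.g.hom.app (op X) x = 0 := by
    have h1 : (kernel.ι S.g ≫ S.g).hom.app (op X) k = S.g.hom.app (op X) x := rfl
    rw [kernel.condition S.g] at h1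
    rw [← h1]
    rfl
  obtain ⟨W, hW, hws⟩ := hloc X x hx
  refine ⟨W, hW, fun Z f hf => ?_⟩
  obtain ⟨y, hy⟩ := hws f hf
  have happ : ((kernel.ι S.g ≫ cokernel.π S.f).hom.app (op X)) k
      = (cokernel.π S.f).hom.app (op X) x := rfl
  rw [happ]
  have hnat := elem_naturality (cokernel.π S.f) f x
  rw [hnat, ← hy]
  have h2 : (cokernel.π S.f).hom.app (op Z) (S.f.hom.app (op Z) y)
      = (S.f ≫ cokernel.π S.f).hom.app (op Z) y := rfl
  rw [h2, cokernel.condition S.f]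
  rfl

/-! ### Componentwise description of the Čech–Alexander complex -/

variable (J : GrothendieckTopology C) (T : C)
  [inst : ∀ n : ℕ, (prod.functor.flip.obj (pow T n)).IsContinuous J J]
variable (F : Sheaf J AddCommGrpCat.{u})

lemma sum_app {A B : Sheaf J AddCommGrpCat.{u}} {ι : Type} (s : Finset ι) (f : ι → (A ⟶ B))
    (U : Cᵒᵖ) (x : A.val.obj U) :
    (∑ i ∈ s, f i).hom.app U x = ∑ i ∈ s, (f i).hom.app U x := by
  classical
  have hadd : ∀ φ ψ : A ⟶ B, (φ + ψ).hom.app U x = φ.hom.app U x + ψ.hom.app U x :=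
    fun _ _ => rfl
  induction s using Finset.induction with
  | empty => rfl
  | @insert a s ha ih => rw [Finset.sum_insert ha, Finset.sum_insert ha, hadd, ih]

lemma smul_app {A B : Sheaf J AddCommGrpCat.{u}} (n : ℤ) (φ : A ⟶ B)
    (U : Cᵒᵖ) (x : A.val.obj U) : (n • φ).hom.app U x = n • (φ.hom.app U x) := rfl

lemma CechAl_map {m : ℕ} {X Z : C} (f : Z ⟶ X) (x : (CechAl J T F m).val.obj (op X)) :
    (CechAl J T F m).val.map f.op x = F.val.map (prod.map f (𝟙 (pow T (m+1)))).op x := rfl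

lemma CechAlAug_apply (X : C) (a : F.val.obj (op X)) :
    (CechAlAug J T F).hom.app (op X) a
      = F.val.map (prod.fst : X ⨯ pow T 1 ⟶ X).op a := rfl

lemma CechAlTerm_apply (r : ℕ) (j : Fin (r+2)) (X : C)
    (t : (CechAl J T F r).val.obj (op X)) :
    (CechAlTerm J T F r j).hom.app (op X) t
      = F.val.map (prod.map (𝟙 X) (face T r j)).op t := rfl

lemma CechAlD_apply (r : ℕ) (X : C) (t : (CechAl J T F r).val.obj (op X)) :
    (CechAlD J T F r).hom.app (op X) t
      = ∑ j : Fin (r+2), ((-1:ℤ)^(j:ℕ)) • F.val.map (prod.map (𝟙 X) (face T r j)).op t := by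
  rw [CechAlD, sum_app]
  refine Finset.sum_congr rfl fun j _ => ?_
  rw [smul_app]
  rfl

/-- A general "term" of the complex induced by a morphism between the powers. -/
def termc {a b : ℕ} (φ : pow T (b+1) ⟶ pow T (a+1)) : CechAl J T F a ⟶ CechAl J T F b :=
  ⟨Functor.whiskerRight (NatTrans.op (prod.functor.flip.map φ)) F.val⟩

lemma term_comp (r : ℕ) (j : Fin (r+2)) (k : Fin (r+3)) :
    CechAlTerm J T F r j ≫ CechAlTerm J T F (r+1) k
      = termc J T F (face T (r+1) k ≫ face T r j) := by
  refine Sheaf.hom_ext ?_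
  apply NatTrans.ext
  funext U
  refine AddCommGrpCat.ext fun t => ?_
  obtain ⟨X⟩ := U
  have h1 : (CechAlTerm J T F r j ≫ CechAlTerm J T F (r+1) k).hom.app (op X) t
      = F.val.map (prod.map (𝟙 X) (face T (r+1) k)).op
          (F.val.map (prod.map (𝟙 X) (face T r j)).op t) := rfl
  have h2 : (termc J T F (face T (r+1) k ≫ face T r j)).hom.app (op X) t
      = F.val.map (prod.map (𝟙 X) (face T (r+1) k ≫ face T r j)).op t := rfl
  have h3 : prod.map (𝟙 X) (face T (r+1) k) ≫ prod.map (𝟙 X) (face T r j)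
      = prod.map (𝟙 X) (face T (r+1) k ≫ face T r j) := by
    rw [prod.map_map]; simp
  rw [h1, h2, ← h3]
  exact restrict_restrict F.val _ _ t

end Statement5Aux

end Auxiliary


section MainAux

namespace Statement5Aux

variable {C : Type u} [SmallCategory C] [HasFiniteProducts C]
variable (J : GrothendieckTopology C) (T : C)
  [inst : ∀ n : ℕ, (prod.functor.flip.obj (pow T n)).IsContinuous J J]
variable (F : Sheaf J AddCommGrpCat.{u})

open Opposite

theorem d_sq (r : ℕ) : CechAlD J T F r ≫ CechAlD J T F (r+1) = 0 := by
  dsimp only [CechAlD]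
  simp only [Preadditive.sum_comp, Preadditive.comp_sum, Preadditive.zsmul_comp,
    Preadditive.comp_zsmul, term_comp, Finset.smul_sum, smul_smul, ← Finset.sum_product']
  let P := Fin (r + 3) × Fin (r + 2)
  let S := Finset.univ.filter fun ij : P => (ij.1 : ℕ) ≤ (ij.2 : ℕ)
  erw [← Finset.sum_add_sum_compl S, ← eq_neg_iff_add_eq_zero, ← Finset.sum_neg_distrib]
  let φ : ∀ ij : P, ij ∈ S → P := fun ij hij =>
    (ij.2.succ,
      Fin.castLT ij.1 (lt_of_le_of_lt (Finset.mem_filter.mp hij).right (Fin.is_lt ij.2)))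
  apply Finset.sum_bij φ
  · intro ij hij
    simp only [S, φ, Finset.mem_univ, Finset.compl_filter, Finset.mem_filter, true_and,
      Fin.val_succ, Fin.coe_castLT] at hij ⊢
    omega
  · rintro ⟨k, j⟩ hij ⟨k', j'⟩ hij' h
    rw [Prod.mk_inj]
    exact ⟨by simpa [φ, Fin.castSucc_castLT] using
        congr_arg Fin.castSucc (congr_arg Prod.snd h),
      by simpa [φ] using congr_arg Prod.fst h⟩
  · rintro ⟨k', j'⟩ hij'
    simp only [S, Finset.mem_univ, forall_true_left, Prod.forall, Finset.compl_filter,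
      not_le, Finset.mem_filter, true_and] at hij'
    refine ⟨(Fin.castSucc j', k'.pred ?_), ?_, ?_⟩
    · rintro rfl
      simp only [Fin.val_zero, not_lt_zero'] at hij'
    · simpa only [S, Finset.mem_univ, forall_true_left, Prod.forall, Finset.mem_filter,
        Fin.coe_castSucc, Fin.coe_pred, true_and] using Nat.le_sub_one_of_lt hij'
    · simp only [φ, Fin.castLT_castSucc, Fin.succ_pred]
  · rintro ⟨k, j⟩ hij
    have hk : (k : ℕ) ≤ (j : ℕ) := by simpa [S] using hij
    dsimp [φ]
    rw [face_face (T := T) hk, ← neg_smul]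
    congr 1
    simp only [Fin.val_succ, Fin.coe_castLT, pow_succ]
    ring

theorem aug_d : CechAlAug J T F ≫ CechAlD J T F 0 = 0 := by
  dsimp only [CechAlD]
  simp only [Preadditive.comp_sum, Preadditive.comp_zsmul]
  have hterm : ∀ j : Fin 2, CechAlAug J T F ≫ CechAlTerm J T F 0 j
      = CechAlAug J T F ≫ CechAlTerm J T F 0 0 := by
    intro j
    refine Sheaf.hom_ext ?_
    apply NatTrans.ext
    funext U
    refine AddCommGrpCat.ext fun a => ?_
    obtain ⟨X⟩ := U
    have h1 : ∀ jj : Fin 2, (CechAlAug J T F ≫ CechAlTerm J T F 0 jj).hom.app (op X) a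
        = F.val.map (prod.map (𝟙 X) (face T 0 jj) ≫ (prod.fst : X ⨯ pow T 1 ⟶ X)).op a := by
      intro jj
      rw [← restrict_restrict]
      rfl
    have h2 : ∀ jj : Fin 2, prod.map (𝟙 X) (face T 0 jj) ≫ (prod.fst : X ⨯ pow T 1 ⟶ X)
        = (prod.fst : X ⨯ pow T 2 ⟶ X) := by
      intro jj
      simp
    rw [h1, h1, h2, h2]
  rw [Fin.sum_univ_two, hterm 1]
  simp

theorem exact_step (r : ℕ) (X : C) (x : (CechAl J T F (r+1)).val.obj (op X))
    (hx : (CechAlD J T F (r+1)).hom.app (op X) x = 0) :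
    ∃ t : (CechAl J T F r).val.obj (op (X ⨯ T)),
      (CechAlD J T F r).hom.app (op (X ⨯ T)) t
        = (CechAl J T F (r+1)).val.map (prod.fst : X ⨯ T ⟶ X).op x := by
  set u : (CechAl J T F (r+1)).val.obj (op (X ⨯ T)) :=
    (CechAl J T F (r+1)).val.map (prod.fst : X ⨯ T ⟶ X).op x with hu_def
  have hu : (CechAlD J T F (r+1)).hom.app (op (X ⨯ T)) u = 0 := by
    rw [hu_def, ← elem_naturality, hx, map_zero]
  set t : (CechAl J T F r).val.obj (op (X ⨯ T)) :=
    F.val.map (ins (prod.snd : X ⨯ T ⟶ T) (r+1)).op u with ht_def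
  refine ⟨t, ?_⟩
  rw [CechAlD_apply] at hu ⊢
  have h2 := congrArg (F.val.map (ins (prod.snd : X ⨯ T ⟶ T) (r+2)).op) hu
  erw [map_sum, map_zero] at h2
  have h3 : ∀ k : Fin (r+3),
      F.val.map (ins (prod.snd : X ⨯ T ⟶ T) (r+2)).op
        (((-1:ℤ)^(k:ℕ)) • F.val.map (prod.map (𝟙 (X ⨯ T)) (face T (r+1) k)).op u)
      = ((-1:ℤ)^(k:ℕ)) • F.val.map
          (ins (prod.snd : X ⨯ T ⟶ T) (r+2) ≫ prod.map (𝟙 (X ⨯ T)) (face T (r+1) k)).op u := by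
    intro k
    erw [map_zsmul, restrict_restrict F.val _ _ u]
    rfl
  rw [Finset.sum_congr rfl (fun k _ => h3 k), Fin.sum_univ_succ, ins_face_zero] at h2
  have h4 : ∀ k' : Fin (r+2),
      ((-1:ℤ)^((k'.succ : Fin (r+3)):ℕ)) • F.val.map
          (ins (prod.snd : X ⨯ T ⟶ T) (r+2)
            ≫ prod.map (𝟙 (X ⨯ T)) (face T (r+1) k'.succ)).op u
      = -(((-1:ℤ)^(k':ℕ)) • F.val.map (prod.map (𝟙 (X ⨯ T)) (face T r k')).op t) := by
    intro k'
    erw [ins_face_succ, ← restrict_restrict F.val _ _ u, ← ht_def, Fin.val_succ, pow_succ,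
      mul_neg_one, neg_smul]
  rw [Finset.sum_congr rfl (fun k' _ => h4 k'), Finset.sum_neg_distrib] at h2
  simp only [Fin.val_zero, pow_zero, one_smul, op_id, CategoryTheory.Functor.map_id,
    CategoryTheory.id_apply] at h2
  exact (add_neg_eq_zero.mp h2).symm

theorem exact_step0 (X : C) (x : (CechAl J T F 0).val.obj (op X))
    (hx : (CechAlD J T F 0).hom.app (op X) x = 0) :
    ∃ t : F.val.obj (op (X ⨯ T)),
      (CechAlAug J T F).hom.app (op (X ⨯ T)) t
        = (CechAl J T F 0).val.map (prod.fst : X ⨯ T ⟶ X).op x := by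
  set u : (CechAl J T F 0).val.obj (op (X ⨯ T)) :=
    (CechAl J T F 0).val.map (prod.fst : X ⨯ T ⟶ X).op x with hu_def
  have hu : (CechAlD J T F 0).hom.app (op (X ⨯ T)) u = 0 := by
    rw [hu_def, ← elem_naturality, hx, map_zero]
  set t : F.val.obj (op (X ⨯ T)) :=
    F.val.map (eMap (prod.snd : X ⨯ T ⟶ T)).op u with ht_def
  refine ⟨t, ?_⟩
  rw [CechAlD_apply] at hu
  have h2 := congrArg (F.val.map (ins (prod.snd : X ⨯ T ⟶ T) 1).op) hu
  erw [map_sum, map_zero] at h2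
  have h3 : ∀ k : Fin 2,
      F.val.map (ins (prod.snd : X ⨯ T ⟶ T) 1).op
        (((-1:ℤ)^(k:ℕ)) • F.val.map (prod.map (𝟙 (X ⨯ T)) (face T 0 k)).op u)
      = ((-1:ℤ)^(k:ℕ)) • F.val.map
          (ins (prod.snd : X ⨯ T ⟶ T) 1 ≫ prod.map (𝟙 (X ⨯ T)) (face T 0 k)).op u := by
    intro k
    erw [map_zsmul, restrict_restrict F.val _ _ u]
    rfl
  rw [Finset.sum_congr rfl (fun k _ => h3 k), Fin.sum_univ_succ, ins_face_zero] at h2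
  rw [Fin.sum_univ_one, ins_face_one] at h2
  simp only [Fin.val_zero, pow_zero, one_smul, op_id, CategoryTheory.Functor.map_id,
    CategoryTheory.id_apply, Fin.val_succ, pow_succ, pow_zero, one_mul, neg_smul,
    one_smul] at h2
  have h6 : (CechAlAug J T F).hom.app (op (X ⨯ T)) t
      = F.val.map ((prod.fst : (X ⨯ T) ⨯ pow T 1 ⟶ X ⨯ T) ≫ eMap (prod.snd : X ⨯ T ⟶ T)).op u := by
    erw [CechAlAug_apply, ht_def, restrict_restrict F.val _ _ u]
    rfl
  rw [h6]
  exact (add_neg_eq_zero.mp h2).symm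

end Statement5Aux

end MainAux


/-- Let `(C, J)` be a site with finite products, and `T` an object such
that for every `X` the sieve generated by the projection `X × T → X` is `J`-covering.
(The instance hypothesis records the fact, noted in the context, that `X ↦ F(X × T^n)`
is a sheaf whenever `F` is.) Then for every abelian sheaf `F` on `(C, J)` the augmented
Čech–Alexander complex `0 → F → C⁰_T(F) → C¹_T(F) → ⋯` is exact: the augmentation is a
monomorphism and the complex is exact at every spot. -/
theorem statement5 {C : Type u} [SmallCategory C] [HasFiniteProducts C]
    (J : GrothendieckTopology C) (T : C)
    [∀ n : ℕ, (prod.functor.flip.obj (pow T n)).IsContinuous J J]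
    (hT : ∀ X : C, Sieve.generate (Presieve.singleton (prod.fst : X ⨯ T ⟶ X)) ∈ J X)
    (F : Sheaf J AddCommGrpCat.{u}) :
    Mono (CechAlAug J T F) ∧
    (∃ w : CechAlAug J T F ≫ CechAlD J T F 0 = 0,
      (ShortComplex.mk (CechAlAug J T F) (CechAlD J T F 0) w).Exact) ∧
    ∀ r : ℕ, ∃ w : CechAlD J T F r ≫ CechAlD J T F (r + 1) = 0,
      (ShortComplex.mk (CechAlD J T F r) (CechAlD J T F (r + 1)) w).Exact := by
  constructor
  · -- the augmentation is a monomorphism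
    apply Sheaf.mono_of_injective
    intro U
    obtain ⟨X⟩ := U
    intro a b hab
    refine Statement5Aux.sections_eq_of_locally_eq F _ (hT X) ?_
    rintro Z f ⟨Z', h, g, hg, rfl⟩
    cases hg
    rw [← Statement5Aux.restrict_restrict F.val h (prod.fst : X ⨯ T ⟶ X) a,
        ← Statement5Aux.restrict_restrict F.val h (prod.fst : X ⨯ T ⟶ X) b]
    congr 1
    have hfac : (prod.fst : X ⨯ T ⟶ X)
        = (prod.map (𝟙 X) (Pi.lift fun _ : Fin 1 => 𝟙 T : T ⟶ pow T 1)) ≫ (prod.fst : X ⨯ pow T 1 ⟶ X) := by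
      simp [pow]
    erw [hfac, ← Statement5Aux.restrict_restrict, ← Statement5Aux.restrict_restrict]
    exact congrArg _ hab
  constructor
  · -- exactness at `C⁰`
    refine ⟨Statement5Aux.aug_d J T F, ?_⟩
    apply Statement5Aux.exact_of_locally_exact
    intro X x hx
    obtain ⟨t, ht⟩ := Statement5Aux.exact_step0 J T F X x hx
    refine ⟨_, hT X, ?_⟩
    rintro Z f ⟨Z', h, g, hg, rfl⟩
    cases hg
    refine ⟨F.val.map h.op t, ?_⟩
    calc (CechAlAug J T F).hom.app (Opposite.op Z) (F.val.map h.op t)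
        = (CechAl J T F 0).val.map h.op
            ((CechAlAug J T F).hom.app (Opposite.op (X ⨯ T)) t) :=
          (Statement5Aux.elem_naturality (CechAlAug J T F) h t).symm
      _ = (CechAl J T F 0).val.map h.op
            ((CechAl J T F 0).val.map (prod.fst : X ⨯ T ⟶ X).op x) := by rw [ht]
      _ = (CechAl J T F 0).val.map (h ≫ (prod.fst : X ⨯ T ⟶ X)).op x :=
          Statement5Aux.restrict_restrict _ _ _ _
  · -- exactness at `Cʳ⁺¹`
    intro r
    refine ⟨Statement5Aux.d_sq J T F r, ?_⟩
    apply Statement5Aux.exact_of_locally_exact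
    intro X x hx
    obtain ⟨t, ht⟩ := Statement5Aux.exact_step J T F r X x hx
    refine ⟨_, hT X, ?_⟩
    rintro Z f ⟨Z', h, g, hg, rfl⟩
    cases hg
    refine ⟨(CechAl J T F r).val.map h.op t, ?_⟩
    calc (CechAlD J T F r).hom.app (Opposite.op Z) ((CechAl J T F r).val.map h.op t)
        = (CechAl J T F (r+1)).val.map h.op
            ((CechAlD J T F r).hom.app (Opposite.op (X ⨯ T)) t) :=
          (Statement5Aux.elem_naturality (CechAlD J T F r) h t).symm
      _ = (CechAl J T F (r+1)).val.map h.op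
            ((CechAl J T F (r+1)).val.map (prod.fst : X ⨯ T ⟶ X).op x) := by rw [ht]
      _ = (CechAl J T F (r+1)).val.map (h ≫ (prod.fst : X ⨯ T ⟶ X)).op x :=
          Statement5Aux.restrict_restrict _ _ _ _


end
end

section
/- Let (C, J) be a site, let T, T₁, T₂ be presheaves of sets on C with morphisms u₁ : T₁ → T and u₂ : T₂ → T, and let T₁ ×_T T₂ be their fiber product presheaf with projections p₁ : T₁ ×_T T₂ → T₁ and p₂ : T₁ ×_T T₂ → T₂. Then for every abelian sheaf F on the localized site (C_{/T₂}, J_{T₂}) there is a natural isomorphism u₁^{-1}(u_{2*} F) ≅ p_{1*}(p₂^{-1} F) of abelian sheaves on (C_{/T₁}, J_{T₁}). -/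
/-!
STATEMENT 7: Base change for localized sites: for presheaves `T₁ → T ← T₂` on a site
`(C, J)` and an abelian sheaf `F` on `C_{/T₂}`, there is a natural isomorphism
`u₁⁻¹ (u₂_* F) ≅ p₁_* (p₂⁻¹ F)` of abelian sheaves on `C_{/T₁}`, where
`T₁ ×_T T₂` is the fiber product presheaf with projections `p₁, p₂`.
-/

open CategoryTheory Limits Opposite

universe u

noncomputable section

namespace SliceSite

variable {C : Type u} [SmallCategory C]

/-- The sieve on `X` underlying a sieve on `(X, s)` in the category
`C_{/T} = CostructuredArrow yoneda T` of elements of `T`: it consists of all morphisms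
of `C` underlying a morphism of the given sieve. -/
def underSieve {T : Cᵒᵖ ⥤ Type u} (e : CostructuredArrow yoneda T) (R : Sieve e) :
    Sieve e.left where
  arrows Y g := R.arrows (CostructuredArrow.homMk' e g)
  downward_closed := by
    intro Y Y' g hg h
    rw [CostructuredArrow.homMk'_comp]
    exact R.downward_closed (R.downward_closed hg _) _

/-- The induced Grothendieck topology `J_T` on `C_{/T}`: a sieve is covering if and
only if its sieve of underlying morphisms of `C` is `J`-covering. -/
def sliceTopology (J : GrothendieckTopology C) (T : Cᵒᵖ ⥤ Type u) :
    GrothendieckTopology (CostructuredArrow yoneda T) where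
  sieves e R := underSieve e R ∈ J e.left
  top_mem' e := J.superset_covering (fun Y f _ => trivial) (J.top_mem e.left)
  pullback_stable' := by
    intro e e' R η hR
    refine J.superset_covering ?_ (J.pullback_stable η.left hR)
    intro Y f hf
    have p : CostructuredArrow.mk (yoneda.map (f ≫ η.left) ≫ e.hom) =
        CostructuredArrow.mk (yoneda.map f ≫ e'.hom) := by
      rw [Functor.map_comp, Category.assoc, CostructuredArrow.w]
    have heq : CostructuredArrow.homMk' e (f ≫ η.left) =
        eqToHom p ≫ (CostructuredArrow.homMk' e' f ≫ η) := by
      apply CostructuredArrow.hom_ext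
      simp
    have hf' : R.arrows (CostructuredArrow.homMk' e (f ≫ η.left)) := hf
    rw [heq] at hf'
    have := R.downward_closed hf' (eqToHom p.symm)
    simp at this
    exact this
  transitive' := by
    intro e R hR S hS
    refine J.transitive hR _ ?_
    intro Y f hf
    refine J.superset_covering ?_ (hS (f := CostructuredArrow.homMk' e f) hf)
    intro Y' g hg
    show S.arrows (CostructuredArrow.homMk' e (g ≫ f))
    rw [CostructuredArrow.homMk'_comp]
    exact S.downward_closed hg _

end SliceSite

namespace SliceSite
variable {C : Type u} [SmallCategory C]
variable {T T₁ T₂ : Cᵒᵖ ⥤ Type u} (u₁ : T₁ ⟶ T) (u₂ : T₂ ⟶ T)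

def squareIso :
    CostructuredArrow.map (S := yoneda (C := C)) (pullback.fst u₁ u₂) ⋙ CostructuredArrow.map u₁ ≅
    CostructuredArrow.map (pullback.snd u₁ u₂) ⋙ CostructuredArrow.map u₂ :=
  NatIso.ofComponents
    (fun c => CostructuredArrow.isoMk (Iso.refl _)
      (by simp [pullback.condition]))
    (fun f => by apply CostructuredArrow.hom_ext; simp)

def squareIsoOp :
    (CostructuredArrow.map (S := yoneda (C := C)) (pullback.fst u₁ u₂)).op ⋙
      (CostructuredArrow.map u₁).op ≅
    (CostructuredArrow.map (pullback.snd u₁ u₂)).op ⋙ (CostructuredArrow.map u₂).op :=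
  NatIso.ofComponents
    (fun x => ((squareIso u₁ u₂).app x.unop).op.symm)
    (fun f => by
      apply Quiver.Hom.unop_inj
      simpa using ((squareIso u₁ u₂).inv.naturality f.unop).symm)

local notation "M₁" => CostructuredArrow.map (S := yoneda (C := C)) u₁
local notation "M₂" => CostructuredArrow.map (S := yoneda (C := C)) u₂
local notation "Q₁" => CostructuredArrow.map (S := yoneda (C := C)) (pullback.fst u₁ u₂)
local notation "Q₂" => CostructuredArrow.map (S := yoneda (C := C)) (pullback.snd u₁ u₂)

variable (Y : (CostructuredArrow yoneda T₁)ᵒᵖ)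

@[simps]
def cmp : StructuredArrow Y (Q₁).op ⥤ StructuredArrow ((M₁).op.obj Y) (M₂).op where
  obj j := StructuredArrow.mk (Y := (Q₂).op.obj j.right)
    ((M₁).op.map j.hom ≫ (squareIsoOp u₁ u₂).hom.app j.right)
  map {j j'} φ := StructuredArrow.homMk ((Q₂).op.map φ.right) (by
    have h1 := (squareIsoOp u₁ u₂).hom.naturality φ.right
    have h2 := StructuredArrow.w φ
    dsimp at h1 h2 ⊢
    rw [Category.assoc, ← h1, ← Category.assoc, ← h2]; simp)
  map_id j := by apply StructuredArrow.hom_ext; simp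
  map_comp φ φ' := by apply StructuredArrow.hom_ext; simp


def tq (d : StructuredArrow ((M₁).op.obj Y) (M₂).op) :
    yoneda.obj d.right.unop.left ⟶ pullback u₁ u₂ :=
  pullback.lift (yoneda.map d.hom.unop.left ≫ Y.unop.hom) d.right.unop.hom
    (by simpa using CostructuredArrow.w d.hom.unop)

def tOb (d : StructuredArrow ((M₁).op.obj Y) (M₂).op) : StructuredArrow Y (Q₁).op :=
  StructuredArrow.mk (Y := op (CostructuredArrow.mk (tq u₁ u₂ Y d)))
    (CostructuredArrow.homMk (f := (Q₁).obj (CostructuredArrow.mk (tq u₁ u₂ Y d))) (f' := Y.unop)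
      d.hom.unop.left (by simp [tq]; rw [pullback.lift_fst])).op

def tMap (d : StructuredArrow ((M₁).op.obj Y) (M₂).op) :
    (cmp u₁ u₂ Y).obj (tOb u₁ u₂ Y d) ⟶ d :=
  StructuredArrow.homMk
    ((CostructuredArrow.homMk (f := d.right.unop)
        (f' := (Q₂).obj (CostructuredArrow.mk (tq u₁ u₂ Y d))) (𝟙 _) (by simp [tq]; rw [pullback.lift_snd])).op)
    (by
      apply Quiver.Hom.unop_inj
      apply CostructuredArrow.hom_ext
      simp [tOb, squareIsoOp, squareIso]
      exact (Category.id_comp _).trans (Category.id_comp _))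

lemma hB (d : StructuredArrow ((M₁).op.obj Y) (M₂).op)
    (z : CostructuredArrow (cmp u₁ u₂ Y) d) :
    z.hom.right.unop.left ≫ z.left.hom.unop.left = d.hom.unop.left := by
  have := congrArg (fun (m : (M₁).op.obj Y ⟶ (M₂).op.obj d.right) => m.unop.left)
    (StructuredArrow.w z.hom)
  dsimp [cmp, squareIsoOp, squareIso] at this
  simp at this
  exact this

def tDelta (d : StructuredArrow ((M₁).op.obj Y) (M₂).op)
    (z : CostructuredArrow (cmp u₁ u₂ Y) d) :
    CostructuredArrow.mk (tq u₁ u₂ Y d) ⟶ z.left.right.unop :=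
  CostructuredArrow.homMk z.hom.right.unop.left (by
    apply pullback.hom_ext
    · have h1 := CostructuredArrow.w z.left.hom.unop
      have h2 := hB u₁ u₂ Y d z
      dsimp [tq] at *
      simp only [Category.assoc, pullback.lift_fst]
      rw [← h1, ← Category.assoc]
      erw [← yoneda.map_comp, h2]
    · have h3 := CostructuredArrow.w z.hom.right.unop
      dsimp [tq] at *
      simp only [Category.assoc, pullback.lift_snd]
      exact h3)

def tFrom (d : StructuredArrow ((M₁).op.obj Y) (M₂).op)
    (z : CostructuredArrow (cmp u₁ u₂ Y) d) :
    z ⟶ CostructuredArrow.mk (tMap u₁ u₂ Y d) :=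
  CostructuredArrow.homMk
    (StructuredArrow.homMk (tDelta u₁ u₂ Y d z).op (by
      apply Quiver.Hom.unop_inj
      apply CostructuredArrow.hom_ext
      have h2 := hB u₁ u₂ Y d z
      simp [tOb, tDelta]
      exact h2))
    (by
      apply StructuredArrow.hom_ext
      apply Quiver.Hom.unop_inj
      apply CostructuredArrow.hom_ext
      simp [tMap, tDelta, cmp]
      exact Category.id_comp _)

def tIsTerminal (d : StructuredArrow ((M₁).op.obj Y) (M₂).op) :
    IsTerminal (CostructuredArrow.mk (tMap u₁ u₂ Y d)) :=
  IsTerminal.ofUniqueHom (tFrom u₁ u₂ Y d) (by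
    intro z m
    apply CostructuredArrow.hom_ext
    apply StructuredArrow.hom_ext
    apply Quiver.Hom.unop_inj
    apply CostructuredArrow.hom_ext
    have := congrArg (fun (χ : (cmp u₁ u₂ Y).obj z.left ⟶ d) => χ.right.unop.left)
      (CostructuredArrow.w m)
    dsimp [tMap, cmp] at this
    erw [Category.id_comp] at this
    simp [tFrom, tDelta]
    exact this)

instance cmpInitial : (cmp u₁ u₂ Y).Initial :=
  ⟨fun d => by
    have : Nonempty (CostructuredArrow (cmp u₁ u₂ Y) d) :=
      ⟨CostructuredArrow.mk (tMap u₁ u₂ Y d)⟩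
    exact zigzag_isConnected (fun z₁ z₂ =>
      Zigzag.trans
        (Relation.ReflTransGen.single (Zag.of_hom (tFrom u₁ u₂ Y d z₁)))
        (Relation.ReflTransGen.single (Zag.of_inv (tFrom u₁ u₂ Y d z₂))))⟩

section KanExt
variable (F : (CostructuredArrow yoneda T₂)ᵒᵖ ⥤ AddCommGrpCat.{u})

def bcCounit : (Q₁).op ⋙ (M₁).op ⋙ (M₂).op.ran.obj F ⟶ (Q₂).op ⋙ F :=
  Functor.whiskerRight (squareIsoOp u₁ u₂).hom ((M₂).op.ran.obj F) ≫
    Functor.whiskerLeft (Q₂).op ((M₂).op.ranCounit.app F)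

def bcExtension : Functor.RightExtension (Q₁).op ((Q₂).op ⋙ F) :=
  Functor.RightExtension.mk ((M₁).op ⋙ (M₂).op.ran.obj F) (bcCounit u₁ u₂ F)

def bcPointwise : (bcExtension u₁ u₂ F).IsPointwiseRightKanExtension := fun Y => by
  have hR := ((M₂).op.isPointwiseRightKanExtensionRanCounit F) ((M₁).op.obj Y)
  exact IsLimit.ofIsoLimit
    ((Functor.Initial.isLimitWhiskerEquiv (cmp u₁ u₂ Y) _).symm hR)
    (Cones.ext (Iso.refl _) (fun j => by
      dsimp [bcExtension, bcCounit, cmp]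
      simp
      rfl))

instance : ((M₁).op ⋙ (M₂).op.ran.obj F).IsRightKanExtension (bcCounit u₁ u₂ F) :=
  (bcPointwise u₁ u₂ F).isRightKanExtension

set_option maxHeartbeats 1000000 in
def bcMap :
    (M₂).op.ran ⋙
        (Functor.whiskeringLeft _ _ AddCommGrpCat.{u}).obj (M₁).op ⟶
      (Functor.whiskeringLeft _ _ AddCommGrpCat.{u}).obj (Q₂).op ⋙ (Q₁).op.ran where
  app F := Functor.liftOfIsRightKanExtension ((Q₁).op.ran.obj ((Q₂).op ⋙ F))
    ((Q₁).op.ranCounit.app ((Q₂).op ⋙ F)) ((M₁).op ⋙ (M₂).op.ran.obj F)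
    (bcCounit u₁ u₂ F)
  naturality {F F'} φ := by
    apply Functor.hom_ext_of_isRightKanExtension _ ((Q₁).op.ranCounit.app ((Q₂).op ⋙ F'))
    dsimp only [Functor.comp_obj, Functor.comp_map, Functor.whiskeringLeft_obj_obj,
      Functor.whiskeringLeft_obj_map]
    have h3 := (Q₁).op.ranCounit.naturality (Functor.whiskerLeft (Q₂).op φ)
    dsimp only [Functor.comp_obj, Functor.comp_map, Functor.whiskeringLeft_obj_obj,
      Functor.whiskeringLeft_obj_map, Functor.id_obj, Functor.id_map] at h3
    rw [Functor.whiskerLeft_comp, Functor.whiskerLeft_comp, Category.assoc, Category.assoc,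
      Functor.liftOfIsRightKanExtension_fac, h3, ← Category.assoc,
      Functor.liftOfIsRightKanExtension_fac]
    ext x
    have h1 := ((M₂).op.ran.map φ).naturality ((squareIsoOp u₁ u₂).hom.app x)
    have h2 := congr_app ((M₂).op.ranCounit.naturality φ) ((Q₂).op.obj x)
    dsimp only [Functor.comp_obj, Functor.op_obj, Functor.comp_map, Functor.whiskeringLeft_obj_obj,
      Functor.whiskeringLeft_obj_map, Functor.whiskerLeft_app, NatTrans.comp_app, Functor.id_obj,
      Functor.id_map] at h1 h2
    simp only [bcCounit, NatTrans.comp_app, Functor.whiskerLeft_app, Functor.whiskerRight_app,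
      Functor.comp_obj, Functor.op_obj]
    rw [← Category.assoc, ← h1, Category.assoc, h2, Category.assoc]

instance (F : (CostructuredArrow yoneda T₂)ᵒᵖ ⥤ AddCommGrpCat.{u}) :
    IsIso ((bcMap u₁ u₂).app F) := by
  have : (bcMap u₁ u₂).app F =
      (Functor.rightKanExtensionUnique _ (bcCounit u₁ u₂ F) _
        ((Q₁).op.ranCounit.app ((Q₂).op ⋙ F))).hom := by
    apply Functor.hom_ext_of_isRightKanExtension _ ((Q₁).op.ranCounit.app ((Q₂).op ⋙ F))
    simp [bcMap, Functor.rightKanExtensionUnique, Functor.rightKanExtensionUniqueOfIso]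
  rw [this]
  infer_instance

instance : IsIso (bcMap u₁ u₂) := NatIso.isIso_of_isIso_app _

end KanExt

variable {C : Type u} [SmallCategory C] (J : GrothendieckTopology C)

instance mapIsCocontinuous {T' T : Cᵒᵖ ⥤ Type u} (v : T' ⟶ T) :
    (CostructuredArrow.map v).IsCocontinuous (sliceTopology J T') (sliceTopology J T) where
  cover_lift {e S} hS := by
    refine J.superset_covering ?_ hS
    intro Z f hf
    exact hf

end SliceSite

open SliceSite

/-- Let `(C, J)` be a site, `T, T₁, T₂` presheaves of sets on `C` with
morphisms `u₁ : T₁ ⟶ T`, `u₂ : T₂ ⟶ T`, and let `T₁ ×_T T₂` be the fiber product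
presheaf with projections `p₁, p₂`. The inverse image functors are precomposition on the
localized sites (the `IsContinuous` instance hypotheses record the fact, noted in the
context, that precomposition preserves sheaves), and the direct image functors are
(arbitrarily given) right adjoints of them. Then for every abelian sheaf `F` on
`(C_{/T₂}, J_{T₂})` there is an isomorphism `u₁⁻¹(u₂_* F) ≅ p₁_*(p₂⁻¹ F)`, naturally
in `F`. -/
theorem statement7 {C : Type u} [SmallCategory C] (J : GrothendieckTopology C)
    {T T₁ T₂ : Cᵒᵖ ⥤ Type u} (u₁ : T₁ ⟶ T) (u₂ : T₂ ⟶ T)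
    [(CostructuredArrow.map u₁).IsContinuous (sliceTopology J T₁) (sliceTopology J T)]
    [(CostructuredArrow.map u₂).IsContinuous (sliceTopology J T₂) (sliceTopology J T)]
    [(CostructuredArrow.map (pullback.fst u₁ u₂)).IsContinuous
      (sliceTopology J (pullback u₁ u₂)) (sliceTopology J T₁)]
    [(CostructuredArrow.map (pullback.snd u₁ u₂)).IsContinuous
      (sliceTopology J (pullback u₁ u₂)) (sliceTopology J T₂)]
    (u₂Star : Sheaf (sliceTopology J T₂) AddCommGrpCat.{u} ⥤
      Sheaf (sliceTopology J T) AddCommGrpCat.{u})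
    (adj₂ : (CostructuredArrow.map u₂).sheafPushforwardContinuous AddCommGrpCat.{u}
      (sliceTopology J T₂) (sliceTopology J T) ⊣ u₂Star)
    (p₁Star : Sheaf (sliceTopology J (pullback u₁ u₂)) AddCommGrpCat.{u} ⥤
      Sheaf (sliceTopology J T₁) AddCommGrpCat.{u})
    (adjP : (CostructuredArrow.map (pullback.fst u₁ u₂)).sheafPushforwardContinuous
      AddCommGrpCat.{u} (sliceTopology J (pullback u₁ u₂)) (sliceTopology J T₁) ⊣ p₁Star) :
    Nonempty
      (u₂Star ⋙ (CostructuredArrow.map u₁).sheafPushforwardContinuous AddCommGrpCat.{u}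
          (sliceTopology J T₁) (sliceTopology J T) ≅
        (CostructuredArrow.map (pullback.snd u₁ u₂)).sheafPushforwardContinuous
            AddCommGrpCat.{u} (sliceTopology J (pullback u₁ u₂)) (sliceTopology J T₂) ⋙
          p₁Star) := by
  constructor
  haveI := SliceSite.mapIsCocontinuous J u₂
  haveI := SliceSite.mapIsCocontinuous J (pullback.fst u₁ u₂)
  let adj₂' := (CostructuredArrow.map u₂).sheafAdjunctionCocontinuous AddCommGrpCat.{u}
    (sliceTopology J T₂) (sliceTopology J T)
  let adjP' := (CostructuredArrow.map (pullback.fst u₁ u₂)).sheafAdjunctionCocontinuous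
    AddCommGrpCat.{u} (sliceTopology J (pullback u₁ u₂)) (sliceTopology J T₁)
  let Θ : (CostructuredArrow.map u₂).sheafPushforwardCocontinuous AddCommGrpCat.{u}
        (sliceTopology J T₂) (sliceTopology J T) ⋙
        (CostructuredArrow.map u₁).sheafPushforwardContinuous AddCommGrpCat.{u}
          (sliceTopology J T₁) (sliceTopology J T) ⟶
      (CostructuredArrow.map (pullback.snd u₁ u₂)).sheafPushforwardContinuous AddCommGrpCat.{u}
          (sliceTopology J (pullback u₁ u₂)) (sliceTopology J T₂) ⋙
        (CostructuredArrow.map (pullback.fst u₁ u₂)).sheafPushforwardCocontinuous AddCommGrpCat.{u}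
          (sliceTopology J (pullback u₁ u₂)) (sliceTopology J T₁) :=
    { app := fun X => ObjectProperty.homMk ((SliceSite.bcMap u₁ u₂).app X.val)
      naturality := fun X X' f => by
        apply Sheaf.hom_ext
        exact (SliceSite.bcMap u₁ u₂).naturality f.hom }
  haveI : ∀ X, IsIso (Θ.app X) := fun X => by
    haveI : IsIso ((sheafToPresheaf (sliceTopology J T₁) AddCommGrpCat.{u}).map (Θ.app X)) := by
      show IsIso ((SliceSite.bcMap u₁ u₂).app X.val)
      infer_instance
    exact isIso_of_reflects_iso (Θ.app X) (sheafToPresheaf (sliceTopology J T₁) AddCommGrpCat.{u})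
  haveI : IsIso Θ := NatIso.isIso_of_isIso_app Θ
  exact (Functor.isoWhiskerRight (adj₂.rightAdjointUniq adj₂') _) ≪≫ asIso Θ ≪≫
    (Functor.isoWhiskerLeft _ (adjP.rightAdjointUniq adjP').symm)


end
end
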